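/- In V = F_4^5 there do not exist three pairwise distinct simplex lines S_1, S_2, S_3 such that S_1 ∩ S_2, S_1 ∩ S_3, S_2 ∩ S_3 are three pairwise distinct 1-dimensional subspaces. Equivalently, every maximal clique in the graph of simplex lines (adjacency: 1-dimensional intersection) consists of all simplex lines through a fixed simplex point. -/

import Mathlib

/-- A vector of `F^n` is *simplex* if exactly one of its coordinates is zero. -/
def SimplexVec {F : Type*} [Field F] [DecidableEq F] {n : ℕ} (x : Fin n → F) : Prop :=
  (Finset.univ.filter (fun i => x i = 0)).card = 1

/-- A *simplex point* is a 1-dimensional subspace spanned by a simplex vector. -/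
def SimplexPoint {F : Type*} [Field F] [DecidableEq F] {n : ℕ}
    (P : Submodule F (Fin n → F)) : Prop :=
  ∃ x : Fin n → F, SimplexVec x ∧ P = Submodule.span F {x}

/-- A *simplex line* is a 2-dimensional subspace all of whose nonzero vectors
are simplex. -/
def SimplexLine {F : Type*} [Field F] [DecidableEq F] {n : ℕ}
    (L : Submodule F (Fin n → F)) : Prop :=
  Module.finrank F ↥L = 2 ∧ ∀ x ∈ L, x ≠ 0 → SimplexVec x

/-- The graph of simplex lines: two simplex lines are adjacent when their
intersection is 1-dimensional. -/
def simplexLineGraph (F : Type*) [Field F] [DecidableEq F] (n : ℕ) :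
    SimpleGraph {L : Submodule F (Fin n → F) // SimplexLine L} :=
  SimpleGraph.fromRel fun L L' =>
    Module.finrank F ↥((L : Submodule F (Fin n → F)) ⊓ ↑L') = 1

set_option linter.unusedSectionVars false
set_option maxHeartbeats 1000000

section Basics
variable {F : Type*} [Field F] [DecidableEq F]


lemma simplexVec_iff {n : ℕ} {x : Fin n → F} :
    SimplexVec x ↔ ∃ i, x i = 0 ∧ ∀ j, j ≠ i → x j ≠ 0 := by
  unfold SimplexVec
  rw [Finset.card_eq_one]
  constructor
  · rintro ⟨i, hi⟩
    have h1 : x i = 0 := by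
      have : i ∈ Finset.univ.filter (fun l => x l = 0) := by
        rw [hi]; exact Finset.mem_singleton_self i
      simpa using this
    refine ⟨i, h1, fun j hj hx => hj ?_⟩
    have : j ∈ Finset.univ.filter (fun l => x l = 0) := by simp [hx]
    rw [hi] at this; simpa using this
  · rintro ⟨i, hi, hj⟩
    refine ⟨i, ?_⟩
    ext l
    simp only [Finset.mem_filter, Finset.mem_univ, true_and, Finset.mem_singleton]
    constructor
    · intro hl; by_contra hne; exact hj l hne hl
    · rintro rfl; exact hi

lemma two_zero_false {n : ℕ} {x : Fin n → F} (hs : SimplexVec x) {a b : Fin n}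
    (hab : a ≠ b) (ha : x a = 0) (hb : x b = 0) : False := by
  have hsub : ({a, b} : Finset (Fin n)) ⊆ Finset.univ.filter (fun i => x i = 0) := by
    intro l hl
    rcases Finset.mem_insert.mp hl with rfl | hl
    · simp [ha]
    · rw [Finset.mem_singleton] at hl; subst hl; simp [hb]
  have := Finset.card_le_card hsub
  rw [hs, Finset.card_pair hab] at this
  omega

lemma key1 {n : ℕ} {L : Submodule F (Fin n → F)} {u v : Fin n → F}
    (hL : ∀ z ∈ L, z ≠ 0 → SimplexVec z) (hu : u ∈ L) (hv : v ∈ L)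
    {x y : Fin n} (hne : v x • u - u x • v ≠ 0) (hxy : x ≠ y)
    (h : u x * v y = u y * v x) : False := by
  set w := v x • u - u x • v with hw
  have hwL : w ∈ L := Submodule.sub_mem _ (Submodule.smul_mem _ _ hu) (Submodule.smul_mem _ _ hv)
  have hws : SimplexVec w := hL w hwL hne
  have hwx : w x = 0 := by
    simp only [hw, Pi.sub_apply, Pi.smul_apply, smul_eq_mul]
    ring
  have hwy : w y = 0 := by
    simp only [hw, Pi.sub_apply, Pi.smul_apply, smul_eq_mul]
    linear_combination -h
  exact two_zero_false hws hxy hwx hwy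

lemma indep_of_ne {V : Type*} [AddCommGroup V] [Module F V] {P Q : Submodule F V} {p q : V}
    (hp : p ∈ P) (hq : q ∈ Q) (hp0 : p ≠ 0) (hq0 : q ≠ 0)
    (genP : ∀ w ∈ P, ∃ c : F, w = c • p) (genQ : ∀ w ∈ Q, ∃ c : F, w = c • q)
    (hne : P ≠ Q) : ∀ s t : F, s • p + t • q = 0 → s = 0 ∧ t = 0 := by
  intro s t h
  rcases eq_or_ne t 0 with rfl | ht
  · rw [zero_smul, add_zero] at h
    rcases smul_eq_zero.mp h with hs | hp'
    · exact ⟨hs, rfl⟩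
    · exact absurd hp' hp0
  · exfalso
    have hq' : q = (-(t⁻¹ * s)) • p := by
      have h1 : t • q = -(s • p) := eq_neg_of_add_eq_zero_right h
      have h2 : q = t⁻¹ • (t • q) := by rw [smul_smul, inv_mul_cancel₀ ht, one_smul]
      rw [h1] at h2
      rw [h2, smul_neg, smul_smul, ← neg_smul]
    set c := -(t⁻¹ * s) with hc
    have hc0 : c ≠ 0 := by
      intro h0; rw [h0, zero_smul] at hq'; exact hq0 hq'
    apply hne
    apply le_antisymm
    · intro w hw
      obtain ⟨d, hd⟩ := genP w hw
      have : w = (d * c⁻¹) • q := by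
        rw [hd, hq', smul_smul, mul_assoc, inv_mul_cancel₀ hc0, mul_one]
      rw [this]; exact Submodule.smul_mem _ _ hq
    · intro w hw
      obtain ⟨d, hd⟩ := genQ w hw
      have : w = (d * c) • p := by rw [hd, hq', smul_smul]
      rw [this]; exact Submodule.smul_mem _ _ hp

lemma ratio_ne {n : ℕ} {L : Submodule F (Fin n → F)} {u v : Fin n → F}
    (hL : ∀ z ∈ L, z ≠ 0 → SimplexVec z) (hu : u ∈ L) (hv : v ∈ L)
    (hind : ∀ s t : F, s • u + t • v = 0 → s = 0 ∧ t = 0)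
    {x y : Fin n} (hxy : x ≠ y) (hvx : v x ≠ 0) (hvy : v y ≠ 0) :
    u x / v x ≠ u y / v y := by
  intro h
  rw [div_eq_div_iff hvx hvy] at h
  refine key1 hL hu hv (x := x) (y := y) ?_ hxy h
  intro h0
  have := hind (v x) (-(u x)) (by rwa [neg_smul, ← sub_eq_add_neg])
  exact hvx this.1


lemma letters {a b c e g d f cm cn : F}
    (h2 : (1:F) + 1 = 0)
    (ha0 : a ≠ 0) (hc0 : c ≠ 0) (he0 : e ≠ 0)
    (hc3 : c ^ 3 = 1) (he3 : e ^ 3 = 1)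
    (hA1 : c + a + b = 0) (hA2 : c * a * b = 1)
    (hB1 : e + g + d = 0) (hB2 : e * g * d = 1)
    (hC1 : f + cm + cn = 0) (hC2 : f * cm * cn = 1)
    (hbm : cm * a = g) (hbn : cn * b = d) :
    c * f = e ∧ f * g + e * cm = e * f := by
  have hfgd : f * g * d = a * b := by
    linear_combination (-(f*d))*hbm - (f*cm*a)*hbn + (a*b)*hC2
  have hgd0 : e * (g * d - e * e) = 0 := by linear_combination hB2 - he3
  have hgd : g * d = e * e := sub_eq_zero.mp ((mul_eq_zero.mp hgd0).resolve_left he0)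
  have hab0 : c * (a * b - c * c) = 0 := by linear_combination hA2 - hc3
  have hab2 : a * b = c * c := sub_eq_zero.mp ((mul_eq_zero.mp hab0).resolve_left hc0)
  have hfe : f * (e * e) = c * c := by linear_combination (-f)*hgd + hfgd + hab2
  have O1 : c * f = e := by linear_combination (c*e)*hfe - (c*f)*he3 + e*hc3
  have hfab : f * a * b + g * b + d * a = 0 := by
    linear_combination (a*b)*hC1 - b*hbm - a*hbn
  have hcfab : e * a * b + c * g * b + c * d * a = 0 := by
    linear_combination c*hfab - (a*b)*O1
  have hc7 : c = a + b := by linear_combination hA1 - (a+b)*h2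
  have hd7 : d = e + g := by linear_combination hB1 - (e+g)*h2
  have h8 : e * a * a + c * c * g = 0 := by
    linear_combination hcfab + (c*g - e*a)*hc7 - (c*a)*hd7 - (e*a*b)*h2
  have hX : c * (c * (g * b - e * a)) = 0 := by
    linear_combination b*h8 - (e*a)*hab2 - (e*a*c*c)*h2
  have hgb : g * b = e * a :=
    sub_eq_zero.mp (((mul_eq_zero.mp ((mul_eq_zero.mp hX).resolve_left hc0)).resolve_left hc0))
  have h12x : a * f + b * f = e := by linear_combination O1 - f*hc7
  have hTa : a * (f * g + e * cm - e * f) = 0 := by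
    linear_combination e*hbm + g*h12x - f*hgb + (e*g - a*e*f)*h2
  exact ⟨O1, sub_eq_zero.mp ((mul_eq_zero.mp hTa).resolve_left ha0)⟩

end Basics

section F4
variable {F : Type*} [Field F] [Fintype F] [DecidableEq F]


/-- char 2 -/
lemma two_eq_zero (hF : Fintype.card F = 4) : (1:F) + 1 = 0 := by
  have h4 : ((4:ℕ) : F) = 0 := by rw [← hF]; exact FiniteField.cast_card_eq_zero F
  have h4' : (2:F) * 2 = 0 := by push_cast at h4; linear_combination h4
  have := mul_self_eq_zero.mp h4'
  linear_combination this

lemma cube_eq_one (hF : Fintype.card F = 4) {a : F} (ha : a ≠ 0) : a ^ 3 = 1 := by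
  have := FiniteField.pow_card_sub_one_eq_one a ha
  rwa [hF] at this

lemma exists_omega (hF : Fintype.card F = 4) :
    ∃ ω : F, ω ≠ 0 ∧ ω ≠ 1 ∧ ω * ω = ω + 1 ∧ ∀ x : F, x = 0 ∨ x = 1 ∨ x = ω ∨ x = ω + 1 := by
  have h2 := two_eq_zero hF
  obtain ⟨ω, hω0, hω1⟩ : ∃ ω : F, ω ≠ 0 ∧ ω ≠ 1 := by
    by_contra h
    push_neg at h
    have hsub : (Finset.univ : Finset F) ⊆ {0, 1} := by
      intro x _
      rcases eq_or_ne x 0 with h0 | h0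
      · simp [h0]
      · simp [h x h0]
    have := Finset.card_le_card hsub
    rw [Finset.card_univ, hF] at this
    have hle : ({0,1}:Finset F).card ≤ 2 := le_trans (Finset.card_insert_le _ _) (by simp)
    have : (4:ℕ) ≤ 2 := le_trans this hle
    omega
  have hω3 : ω ^ 3 = 1 := cube_eq_one hF hω0
  have hfac : (ω - 1) * (ω * ω + ω + 1) = 0 := by linear_combination hω3
  have hq : ω * ω + ω + 1 = 0 := by
    rcases mul_eq_zero.mp hfac with h | h
    · exact absurd (by linear_combination h) hω1
    · exact h
  have hω2 : ω * ω = ω + 1 := by linear_combination hq - (ω+1)*h2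
  refine ⟨ω, hω0, hω1, hω2, ?_⟩
  -- enumeration
  have hne10 : (1:F) ≠ 0 := one_ne_zero
  have hd1 : ω + 1 ≠ 0 := fun h => hω1 (by linear_combination h - h2)
  have hd2 : ω + 1 ≠ 1 := fun h => hω0 (by linear_combination h)
  have hd3 : ω + 1 ≠ ω := fun h => hne10 (by linear_combination h)
  have hcard : ({0, 1, ω, ω + 1} : Finset F).card = 4 := by
    rw [Finset.card_insert_of_notMem (by simp [hω0.symm, hne10.symm, hd1.symm, Ne.symm]),
      Finset.card_insert_of_notMem (by simp [hω1.symm, hd2.symm]),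
      Finset.card_insert_of_notMem (by simp [hd3.symm]), Finset.card_singleton]
  have huniv : ({0, 1, ω, ω + 1} : Finset F) = Finset.univ :=
    Finset.eq_univ_of_card _ (by rw [hcard, hF])
  intro x
  have : x ∈ ({0, 1, ω, ω + 1} : Finset F) := huniv ▸ Finset.mem_univ x
  simpa using this

lemma triple_facts (hF : Fintype.card F = 4) {a b c : F}
    (ha : a ≠ 0) (hb : b ≠ 0) (hc : c ≠ 0)
    (hab : a ≠ b) (hac : a ≠ c) (hbc : b ≠ c) :
    a + b + c = 0 ∧ a * b * c = 1 := by
  have h2 := two_eq_zero hF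
  obtain ⟨ω, hω0, hω1, hω2, henum⟩ := exists_omega hF
  rcases henum a with ea | ea | ea | ea <;>
    rcases henum b with eb | eb | eb | eb <;>
      rcases henum c with ec | ec | ec | ec <;>
        first
          | exact absurd ea ha | exact absurd eb hb | exact absurd ec hc
          | exact absurd (ea.trans eb.symm) hab
          | exact absurd (ea.trans ec.symm) hac
          | exact absurd (eb.trans ec.symm) hbc
          | exact ⟨by linear_combination ea + eb + ec + (ω+1)*h2,
              by linear_combination (b*c)*ea + c*eb + ω*ec + hω2 + ω*h2⟩
          | exact ⟨by linear_combination ea + eb + ec + (ω+1)*h2,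
              by linear_combination (b*c)*ea + c*eb + (ω+1)*ec + hω2 + ω*h2⟩
          | exact ⟨by linear_combination ea + eb + ec + (ω+1)*h2,
              by linear_combination (b*c)*ea + ω*c*eb + ω*ec + hω2 + ω*h2⟩
          | exact ⟨by linear_combination ea + eb + ec + (ω+1)*h2,
              by linear_combination (b*c)*ea + ω*c*eb + (ω*(ω+1))*ec + hω2 + ω*h2⟩
          | exact ⟨by linear_combination ea + eb + ec + (ω+1)*h2,
              by linear_combination (b*c)*ea + (ω+1)*c*eb + (ω+1)*ec + hω2 + ω*h2⟩
          | exact ⟨by linear_combination ea + eb + ec + (ω+1)*h2,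
              by linear_combination (b*c)*ea + (ω+1)*c*eb + ((ω+1)*ω)*ec + hω2 + ω*h2⟩

end F4
section Triangle
variable {F : Type*} [Field F] [Fintype F] [DecidableEq F]

lemma no_triangle (hF : Fintype.card F = 4) :
    ¬∃ S₁ S₂ S₃ : Submodule F (Fin 5 → F),
        (Module.finrank F ↥S₁ = 2 ∧ ∀ x ∈ S₁, x ≠ 0 → SimplexVec x) ∧
        (Module.finrank F ↥S₂ = 2 ∧ ∀ x ∈ S₂, x ≠ 0 → SimplexVec x) ∧
        (Module.finrank F ↥S₃ = 2 ∧ ∀ x ∈ S₃, x ≠ 0 → SimplexVec x) ∧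
        Module.finrank F ↥(S₁ ⊓ S₂) = 1 ∧ Module.finrank F ↥(S₁ ⊓ S₃) = 1 ∧
        Module.finrank F ↥(S₂ ⊓ S₃) = 1 ∧
        S₁ ⊓ S₂ ≠ S₁ ⊓ S₃ ∧ S₁ ⊓ S₂ ≠ S₂ ⊓ S₃ ∧ S₁ ⊓ S₃ ≠ S₂ ⊓ S₃ := by
  rintro ⟨S₁, S₂, S₃, ⟨-, hsx1⟩, ⟨-, hsx2⟩, ⟨-, hsx3⟩, h12, h13, h23, hne1, hne2, hne3⟩
  have h2 := two_eq_zero hF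
  -- extract generators of the three intersection points
  rw [finrank_eq_one_iff'] at h12 h13 h23
  obtain ⟨vp, hvp0, hvp⟩ := h12
  obtain ⟨vq, hvq0, hvq⟩ := h13
  obtain ⟨vr, hvr0, hvr⟩ := h23
  set p : Fin 5 → F := (vp : Fin 5 → F) with hpdef
  set q : Fin 5 → F := (vq : Fin 5 → F) with hqdef
  set r : Fin 5 → F := (vr : Fin 5 → F) with hrdef
  have hp0 : p ≠ 0 := fun h => hvp0 (Subtype.ext h)
  have hq0 : q ≠ 0 := fun h => hvq0 (Subtype.ext h)
  have hr0 : r ≠ 0 := fun h => hvr0 (Subtype.ext h)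
  have hpm := vp.2
  rw [Submodule.mem_inf] at hpm
  obtain ⟨hpS₁, hpS₂⟩ := hpm
  have hqm := vq.2
  rw [Submodule.mem_inf] at hqm
  obtain ⟨hqS₁, hqS₃⟩ := hqm
  have hrm := vr.2
  rw [Submodule.mem_inf] at hrm
  obtain ⟨hrS₂, hrS₃⟩ := hrm
  have genP : ∀ w ∈ S₁ ⊓ S₂, ∃ c : F, w = c • p := by
    intro w hw
    obtain ⟨c, hc⟩ := hvp ⟨w, hw⟩
    exact ⟨c, by simpa [hpdef] using congrArg Subtype.val hc.symm⟩
  have genQ : ∀ w ∈ S₁ ⊓ S₃, ∃ c : F, w = c • q := by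
    intro w hw
    obtain ⟨c, hc⟩ := hvq ⟨w, hw⟩
    exact ⟨c, by simpa [hqdef] using congrArg Subtype.val hc.symm⟩
  have genR : ∀ w ∈ S₂ ⊓ S₃, ∃ c : F, w = c • r := by
    intro w hw
    obtain ⟨c, hc⟩ := hvr ⟨w, hw⟩
    exact ⟨c, by simpa [hrdef] using congrArg Subtype.val hc.symm⟩
  -- independence of the pairs
  have hindpq : ∀ s t : F, s • p + t • q = 0 → s = 0 ∧ t = 0 :=
    indep_of_ne vp.2 vq.2 hp0 hq0 genP genQ hne1
  have hindpr : ∀ s t : F, s • p + t • r = 0 → s = 0 ∧ t = 0 :=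
    indep_of_ne vp.2 vr.2 hp0 hr0 genP genR hne2
  have hindqr : ∀ s t : F, s • q + t • r = 0 → s = 0 ∧ t = 0 :=
    indep_of_ne vq.2 vr.2 hq0 hr0 genQ genR hne3
  -- simplexity and zero coordinates
  obtain ⟨i, hpi, hpi'⟩ := simplexVec_iff.mp (hsx1 p hpS₁ hp0)
  obtain ⟨j, hqj, hqj'⟩ := simplexVec_iff.mp (hsx1 q hqS₁ hq0)
  obtain ⟨k, hrk, hrk'⟩ := simplexVec_iff.mp (hsx2 r hrS₂ hr0)
  -- zero positions are pairwise distinct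
  have hij : i ≠ j := by
    rintro rfl
    obtain ⟨l, hl⟩ : ∃ l : Fin 5, l ≠ i := by
      rcases eq_or_ne i 0 with rfl | h
      · exact ⟨1, by decide⟩
      · exact ⟨0, fun h0 => h h0.symm⟩
    refine key1 hsx1 hpS₁ hqS₁ (x := l) (y := i) ?_ hl
      (by show p l * q i = p i * q l; rw [hqj, hpi, mul_zero, zero_mul])
    intro h0
    have := hindpq (q l) (-(p l)) (by rwa [neg_smul, ← sub_eq_add_neg])
    exact hqj' l hl this.1
  have hik : i ≠ k := by
    rintro rfl
    obtain ⟨l, hl⟩ : ∃ l : Fin 5, l ≠ i := by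
      rcases eq_or_ne i 0 with rfl | h
      · exact ⟨1, by decide⟩
      · exact ⟨0, fun h0 => h h0.symm⟩
    refine key1 hsx2 hpS₂ hrS₂ (x := l) (y := i) ?_ hl
      (by show p l * r i = p i * r l; rw [hrk, hpi, mul_zero, zero_mul])
    intro h0
    have := hindpr (r l) (-(p l)) (by rwa [neg_smul, ← sub_eq_add_neg])
    exact hrk' l hl this.1
  have hjk : j ≠ k := by
    rintro rfl
    obtain ⟨l, hl⟩ : ∃ l : Fin 5, l ≠ j := by
      rcases eq_or_ne j 0 with rfl | h
      · exact ⟨1, by decide⟩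
      · exact ⟨0, fun h0 => h h0.symm⟩
    refine key1 hsx3 hqS₃ hrS₃ (x := l) (y := j) ?_ hl
      (by show q l * r j = q j * r l; rw [hrk, hqj, mul_zero, zero_mul])
    intro h0
    have := hindqr (r l) (-(q l)) (by rwa [neg_smul, ← sub_eq_add_neg])
    exact hrk' l hl this.1
  -- the key identity at every coordinate
  have key : ∀ x y : Fin 5, x ≠ y → x ≠ i → x ≠ j → x ≠ k → y ≠ i → y ≠ j → y ≠ k →
      (p k / q k) * (q i / r i) = p j / r j ∧
      r x = (r j / p j) * p x + (r i / q i) * q x := by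
    intro x y hxy hxi hxj hxk hyi hyj hyk
    have hqk : q k ≠ 0 := hqj' k (Ne.symm hjk)
    have hqx : q x ≠ 0 := hqj' x hxj
    have hqy : q y ≠ 0 := hqj' y hyj
    have hqi : q i ≠ 0 := hqj' i hij
    have hpx : p x ≠ 0 := hpi' x hxi
    have hpy : p y ≠ 0 := hpi' y hyi
    have hpj : p j ≠ 0 := hpi' j (Ne.symm hij)
    have hpk : p k ≠ 0 := hpi' k (Ne.symm hik)
    have hrx : r x ≠ 0 := hrk' x hxk
    have hry : r y ≠ 0 := hrk' y hyk
    have hri : r i ≠ 0 := hrk' i hik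
    have hrj : r j ≠ 0 := hrk' j hjk
    -- distinctness of ratios on line S₁ (p, q) at coordinates k, x, y
    have d1 : p k / q k ≠ p x / q x := ratio_ne hsx1 hpS₁ hqS₁ hindpq (Ne.symm hxk) hqk hqx
    have d2 : p k / q k ≠ p y / q y := ratio_ne hsx1 hpS₁ hqS₁ hindpq (Ne.symm hyk) hqk hqy
    have d3 : p x / q x ≠ p y / q y := ratio_ne hsx1 hpS₁ hqS₁ hindpq hxy hqx hqy
    have d4 : p j / r j ≠ p x / r x := ratio_ne hsx2 hpS₂ hrS₂ hindpr (Ne.symm hxj) hrj hrx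
    have d5 : p j / r j ≠ p y / r y := ratio_ne hsx2 hpS₂ hrS₂ hindpr (Ne.symm hyj) hrj hry
    have d6 : p x / r x ≠ p y / r y := ratio_ne hsx2 hpS₂ hrS₂ hindpr hxy hrx hry
    have d7 : q i / r i ≠ q x / r x := ratio_ne hsx3 hqS₃ hrS₃ hindqr (Ne.symm hxi) hri hrx
    have d8 : q i / r i ≠ q y / r y := ratio_ne hsx3 hqS₃ hrS₃ hindqr (Ne.symm hyi) hri hry
    have d9 : q x / r x ≠ q y / r y := ratio_ne hsx3 hqS₃ hrS₃ hindqr hxy hrx hry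
    obtain ⟨hA1, hA2⟩ := triple_facts hF (div_ne_zero hpk hqk) (div_ne_zero hpx hqx)
      (div_ne_zero hpy hqy) d1 d2 d3
    obtain ⟨hB1, hB2⟩ := triple_facts hF (div_ne_zero hpj hrj) (div_ne_zero hpx hrx)
      (div_ne_zero hpy hry) d4 d5 d6
    obtain ⟨hC1, hC2⟩ := triple_facts hF (div_ne_zero hqi hri) (div_ne_zero hqx hrx)
      (div_ne_zero hqy hry) d7 d8 d9
    have hbm : (q x / r x) * (p x / q x) = p x / r x := by
      field_simp
    have hbn : (q y / r y) * (p y / q y) = p y / r y := by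
      field_simp
    obtain ⟨O1, O2⟩ := letters h2 (div_ne_zero hpx hqx) (div_ne_zero hpk hqk)
      (div_ne_zero hpj hrj) (cube_eq_one hF (div_ne_zero hpk hqk))
      (cube_eq_one hF (div_ne_zero hpj hrj)) hA1 hA2 hB1 hB2 hC1 hC2 hbm hbn
    refine ⟨O1, ?_⟩
    have hnz : r i * r j * r x ≠ 0 := mul_ne_zero (mul_ne_zero hri hrj) hrx
    field_simp at O2
    have G : q i * p x * r j + p j * q x * r i = p j * q i * r x := by
      apply mul_left_cancel₀ hnz
      linear_combination (r i * r j * r x) * O2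
    field_simp
    linear_combination G + (r x * p j * q i - p j * r i * q x - q i * r j * p x) * h2
  -- the two remaining coordinates
  have hcard3 : ({i, j, k} : Finset (Fin 5)).card = 3 := by
    rw [Finset.card_insert_of_notMem (by simp [hij, hik]),
      Finset.card_insert_of_notMem (by simp [hjk]), Finset.card_singleton]
  have hcardt : (Finset.univ \ ({i, j, k} : Finset (Fin 5))).card = 2 := by
    rw [Finset.card_sdiff_of_subset (Finset.subset_univ _), hcard3]
    simp
  obtain ⟨m, n, hmn, htmn⟩ := Finset.card_eq_two.mp hcardt
  have hmmem : m ∈ Finset.univ \ ({i, j, k} : Finset (Fin 5)) := by rw [htmn]; simp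
  have hnmem : n ∈ Finset.univ \ ({i, j, k} : Finset (Fin 5)) := by rw [htmn]; simp
  simp only [Finset.mem_sdiff, Finset.mem_univ, true_and, Finset.mem_insert,
    Finset.mem_singleton, not_or] at hmmem hnmem
  obtain ⟨hmi, hmj, hmk⟩ := hmmem
  obtain ⟨hni, hnj, hnk⟩ := hnmem
  -- r lies in the span of p and q
  have hqi : q i ≠ 0 := hqj' i hij
  have hpj : p j ≠ 0 := hpi' j (Ne.symm hij)
  have hqk : q k ≠ 0 := hqj' k (Ne.symm hjk)
  have hri : r i ≠ 0 := hrk' i hik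
  have hrj : r j ≠ 0 := hrk' j hjk
  have hreq : r = (r j / p j) • p + (r i / q i) • q := by
    funext l
    simp only [Pi.add_apply, Pi.smul_apply, smul_eq_mul]
    by_cases hli : l = i
    · subst hli
      rw [hpi, mul_zero, zero_add, div_mul_cancel₀ _ hqi]
    · by_cases hlj : l = j
      · subst hlj
        rw [hqj, mul_zero, add_zero, div_mul_cancel₀ _ hpj]
      · by_cases hlk : l = k
        · rw [hlk, hrk]
          have O1 := (key m n hmn hmi hmj hmk hni hnj hnk).1
          field_simp at O1 ⊢
          linear_combination -O1 - (r i * q k * p j) * h2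
        · have : l ∈ Finset.univ \ ({i, j, k} : Finset (Fin 5)) := by
            simp [hli, hlj, hlk]
          rw [htmn] at this
          simp only [Finset.mem_insert, Finset.mem_singleton] at this
          rcases this with rfl | rfl
          · exact (key l n hmn hmi hmj hmk hni hnj hnk).2
          · exact (key l m (Ne.symm hmn) hni hnj hnk hmi hmj hmk).2
  -- contradiction: r would lie on S₁, so S₁ ⊓ S₂ = S₂ ⊓ S₃
  have hrS₁ : r ∈ S₁ := by
    rw [hreq]
    exact Submodule.add_mem _ (Submodule.smul_mem _ _ hpS₁) (Submodule.smul_mem _ _ hqS₁)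
  obtain ⟨c, hc⟩ := genP r (Submodule.mem_inf.mpr ⟨hrS₁, hrS₂⟩)
  have : c • p + (-1 : F) • r = 0 := by rw [neg_smul, one_smul, ← hc, add_neg_cancel]
  have h10 := (hindpr c (-1) this).2
  exact one_ne_zero (neg_eq_zero.mp h10)

end Triangle
section Part2
variable {F : Type*} [Field F] [Fintype F] [DecidableEq F]

lemma simplexVec_smul {n : ℕ} {x : Fin n → F} {c : F} (hc : c ≠ 0) (hx : SimplexVec x) :
    SimplexVec (c • x) := by
  rw [simplexVec_iff] at hx ⊢
  obtain ⟨i, hi, hi'⟩ := hx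
  exact ⟨i, by simp [hi], fun j hj => by
    simp only [Pi.smul_apply, smul_eq_mul]
    exact mul_ne_zero hc (hi' j hj)⟩

lemma exists_simplexLine (hF : Fintype.card F = 4) :
    ∃ L : Submodule F (Fin 5 → F),
      Module.finrank F ↥L = 2 ∧ ∀ x ∈ L, x ≠ 0 → SimplexVec x := by
  have h2 := two_eq_zero hF
  obtain ⟨ω, hω0, hω1, hω2, henum⟩ := exists_omega hF
  have hd1 : ω + 1 ≠ 0 := fun h => hω1 (by linear_combination h - h2)
  set u : Fin 5 → F := ![0, 1, 1, 1, 1] with hu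
  set v : Fin 5 → F := ![1, 0, 1, ω, ω + 1] with hv
  have hind : LinearIndependent F ![u, v] := by
    rw [LinearIndependent.pair_iff]
    intro s t hst
    have h0 := congrFun hst 0
    have h1 := congrFun hst 1
    simp [hu, hv] at h0 h1
    exact ⟨h1, h0⟩
  have husimp : SimplexVec u := by
    rw [simplexVec_iff]
    refine ⟨0, rfl, fun j hj => ?_⟩
    fin_cases j
    · exact absurd rfl hj
    · exact one_ne_zero
    · exact one_ne_zero
    · exact one_ne_zero
    · exact one_ne_zero
  have hvsimp : SimplexVec v := by
    rw [simplexVec_iff]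
    refine ⟨1, rfl, fun j hj => ?_⟩
    fin_cases j
    · exact one_ne_zero
    · exact absurd rfl hj
    · exact one_ne_zero
    · exact hω0
    · exact hd1
  have hlam : ∀ lam : F, SimplexVec (u + lam • v) := by
    intro lam
    rcases henum lam with hl | hl | hl | hl <;> rw [hl]
    · simpa using husimp
    · rw [simplexVec_iff]
      refine ⟨2, ?_, fun j hj => ?_⟩
      · show (1 : F) + 1 * 1 = 0
        linear_combination h2
      · fin_cases j
        · show (0 : F) + 1 * 1 ≠ 0
          intro h; exact one_ne_zero (by linear_combination h)
        · show (1 : F) + 1 * 0 ≠ 0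
          intro h; exact one_ne_zero (by linear_combination h)
        · exact absurd rfl hj
        · show (1 : F) + 1 * ω ≠ 0
          intro h; exact hω1 (by linear_combination h - h2)
        · show (1 : F) + 1 * (ω + 1) ≠ 0
          intro h; exact hω0 (by linear_combination h - h2)
    · rw [simplexVec_iff]
      refine ⟨4, ?_, fun j hj => ?_⟩
      · show (1 : F) + ω * (ω + 1) = 0
        linear_combination hω2 + (ω + 1) * h2
      · fin_cases j
        · show (0 : F) + ω * 1 ≠ 0
          intro h; exact hω0 (by linear_combination h)
        · show (1 : F) + ω * 0 ≠ 0
          intro h; exact one_ne_zero (by linear_combination h)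
        · show (1 : F) + ω * 1 ≠ 0
          intro h; exact hω1 (by linear_combination h - h2)
        · show (1 : F) + ω * ω ≠ 0
          intro h; exact hω0 (by linear_combination h - hω2 - h2)
        · exact absurd rfl hj
    · rw [simplexVec_iff]
      refine ⟨3, ?_, fun j hj => ?_⟩
      · show (1 : F) + (ω + 1) * ω = 0
        linear_combination hω2 + (ω + 1) * h2
      · fin_cases j
        · show (0 : F) + (ω + 1) * 1 ≠ 0
          intro h; exact hd1 (by linear_combination h)
        · show (1 : F) + (ω + 1) * 0 ≠ 0
          intro h; exact one_ne_zero (by linear_combination h)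
        · show (1 : F) + (ω + 1) * 1 ≠ 0
          intro h; exact hω0 (by linear_combination h - h2)
        · exact absurd rfl hj
        · show (1 : F) + (ω + 1) * (ω + 1) ≠ 0
          intro h; exact hd1 (by linear_combination h - hω2 - (ω + 1) * h2)
  refine ⟨Submodule.span F {u, v}, ?_, ?_⟩
  · have hr : Set.range ![u, v] = {u, v} := by
      simp only [Matrix.range_cons, Matrix.range_empty, Set.union_empty, Set.union_singleton]
      exact Set.pair_comm v u
    have hfr := finrank_span_eq_card hind
    rw [hr] at hfr
    simpa using hfr
  · intro x hx hx0
    rw [Submodule.mem_span_pair] at hx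
    obtain ⟨s, t, hst⟩ := hx
    by_cases hs : s = 0
    · subst hs
      rw [zero_smul, zero_add] at hst
      have ht : t ≠ 0 := by rintro rfl; rw [zero_smul] at hst; exact hx0 hst.symm
      rw [← hst]
      exact simplexVec_smul ht hvsimp
    · have heq : s • u + t • v = s • (u + (t / s) • v) := by
        rw [smul_add, smul_smul, mul_div_cancel₀ _ hs]
      rw [← hst, heq]
      exact simplexVec_smul hs (hlam (t / s))

lemma inf_rank_one {P A B : Submodule F (Fin 5 → F)}
    (hP : Module.finrank F ↥P = 1)
    (hA2 : Module.finrank F ↥A = 2) (hB2 : Module.finrank F ↥B = 2)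
    (hAB : A ≠ B) (hPA : P ≤ A) (hPB : P ≤ B) :
    Module.finrank F ↥(A ⊓ B) = 1 := by
  have hle : P ≤ A ⊓ B := le_inf hPA hPB
  have h1 : 1 ≤ Module.finrank F ↥(A ⊓ B) := hP ▸ Submodule.finrank_mono hle
  have h2 : Module.finrank F ↥(A ⊓ B) ≤ 2 := hA2 ▸ Submodule.finrank_mono inf_le_left
  rcases eq_or_lt_of_le h2 with heq | hlt
  · exfalso
    have hABeq : A ⊓ B = A :=
      Submodule.eq_of_le_of_finrank_le inf_le_left (by omega)
    have hAleB : A ≤ B := hABeq ▸ inf_le_right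
    exact hAB (Submodule.eq_of_le_of_finrank_le hAleB (by omega))
  · omega

end Part2


/-- In `F_4^5` there is no triangle of simplex lines with three distinct points
of pairwise intersection; equivalently, every maximal clique of the graph of
simplex lines consists of all simplex lines through a fixed simplex point. -/
theorem no_simplex_triangle_and_max_cliques
    (F : Type*) [Field F] [Fintype F] [DecidableEq F] (hF : Fintype.card F = 4) :
    (¬∃ S₁ S₂ S₃ : Submodule F (Fin 5 → F),
        SimplexLine S₁ ∧ SimplexLine S₂ ∧ SimplexLine S₃ ∧
        S₁ ≠ S₂ ∧ S₁ ≠ S₃ ∧ S₂ ≠ S₃ ∧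
        Module.finrank F ↥(S₁ ⊓ S₂) = 1 ∧ Module.finrank F ↥(S₁ ⊓ S₃) = 1 ∧
        Module.finrank F ↥(S₂ ⊓ S₃) = 1 ∧
        S₁ ⊓ S₂ ≠ S₁ ⊓ S₃ ∧ S₁ ⊓ S₂ ≠ S₂ ⊓ S₃ ∧ S₁ ⊓ S₃ ≠ S₂ ⊓ S₃) ∧
    (∀ s : Set {L : Submodule F (Fin 5 → F) // SimplexLine L},
      (simplexLineGraph F 5).IsClique s →
      (∀ t, (simplexLineGraph F 5).IsClique t → s ⊆ t → s = t) →
      ∃ P : Submodule F (Fin 5 → F), SimplexPoint P ∧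
        s = {L : {L : Submodule F (Fin 5 → F) // SimplexLine L} | P ≤ (L : Submodule F (Fin 5 → F))}) := by
  constructor
  · rintro ⟨S₁, S₂, S₃, h1, h2, h3, -, -, -, h12, h13, h23, d1, d2, d3⟩
    exact no_triangle hF ⟨S₁, S₂, S₃, h1, h2, h3, h12, h13, h23, d1, d2, d3⟩
  · intro s hs hmax
    have hadj : ∀ L L' : {L : Submodule F (Fin 5 → F) // SimplexLine L}, L ∈ s → L' ∈ s →
        L ≠ L' → Module.finrank F ↥((L : Submodule F (Fin 5 → F)) ⊓ ↑L') = 1 := by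
      intro L L' hL hL' hne
      have h := hs hL hL' hne
      simp only [simplexLineGraph, SimpleGraph.fromRel_adj] at h
      rcases h.2 with h' | h'
      · exact h'
      · rwa [inf_comm] at h'
    have mkadj : ∀ (P : Submodule F (Fin 5 → F)), Module.finrank F ↥P = 1 →
        ∀ A B : {L : Submodule F (Fin 5 → F) // SimplexLine L}, A ≠ B →
        P ≤ (A : Submodule F (Fin 5 → F)) → P ≤ (B : Submodule F (Fin 5 → F)) →
        (simplexLineGraph F 5).Adj A B := by
      intro P hP A B hAB hPA hPB
      simp only [simplexLineGraph, SimpleGraph.fromRel_adj]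
      exact ⟨hAB, Or.inl (inf_rank_one hP A.2.1 B.2.1 (fun h => hAB (Subtype.ext h)) hPA hPB)⟩
    rcases Set.eq_empty_or_nonempty s with rfl | ⟨L₁, hL₁⟩
    · exfalso
      obtain ⟨L₀, hL₀⟩ := exists_simplexLine hF
      have hcl : (simplexLineGraph F 5).IsClique {⟨L₀, hL₀⟩} := by
        intro a ha b hb hab
        rw [Set.mem_singleton_iff] at ha hb
        rw [ha, hb] at hab
        exact absurd rfl hab
      have h := hmax _ hcl (Set.empty_subset _)
      exact (Set.singleton_ne_empty _) h.symm
    · by_cases huniq : ∀ L ∈ s, L = L₁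
      · -- s = {L₁}
        have hbot : (L₁ : Submodule F (Fin 5 → F)) ≠ ⊥ := by
          intro h
          have h0 := L₁.2.1
          rw [h] at h0
          rw [finrank_bot] at h0
          omega
        obtain ⟨x, hxL, hx0⟩ := Submodule.exists_mem_ne_zero_of_ne_bot hbot
        have hxs : SimplexVec x := L₁.2.2 x hxL hx0
        have hP1 : Module.finrank F ↥(Submodule.span F {x}) = 1 := finrank_span_singleton hx0
        have hPL₁ : Submodule.span F {x} ≤ (L₁ : Submodule F (Fin 5 → F)) := by
          rw [Submodule.span_le]; simpa using hxL
        refine ⟨Submodule.span F {x}, ⟨x, hxs, rfl⟩, ?_⟩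
        apply Set.eq_of_subset_of_subset
        · intro L hL
          have := huniq L hL
          subst this
          exact hPL₁
        · intro L hL
          by_cases hLL : L = L₁
          · subst hLL; exact hL₁
          · have hcl : (simplexLineGraph F 5).IsClique {L₁, L} := by
              intro a ha b hb hab
              rcases Set.mem_insert_iff.mp ha with rfl | ha' <;>
                rcases Set.mem_insert_iff.mp hb with rfl | hb'
              · exact absurd rfl hab
              · rw [Set.mem_singleton_iff] at hb'; subst hb'
                exact mkadj _ hP1 _ _ hab hPL₁ hL
              · rw [Set.mem_singleton_iff] at ha'; subst ha'
                exact mkadj _ hP1 _ _ hab hL hPL₁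
              · rw [Set.mem_singleton_iff] at ha' hb'; subst ha'; subst hb'
                exact absurd rfl hab
            have hsub : s ⊆ {L₁, L} := by
              intro z hz; rw [huniq z hz]; simp
            have := hmax _ hcl hsub
            rw [this]; simp
      · push_neg at huniq
        obtain ⟨L₂, hL₂, hne21⟩ := huniq
        have h12 : Module.finrank F ↥((L₁ : Submodule F (Fin 5 → F)) ⊓ ↑L₂) = 1 :=
          hadj L₁ L₂ hL₁ hL₂ (Ne.symm hne21)
        obtain ⟨vx, hvx0, hvgen⟩ := finrank_eq_one_iff'.mp h12
        set x : Fin 5 → F := (vx : Fin 5 → F) with hxdef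
        have hx0 : x ≠ 0 := fun h => hvx0 (Subtype.ext h)
        have hxm := vx.2
        rw [Submodule.mem_inf] at hxm
        have hxs : SimplexVec x := L₁.2.2 x hxm.1 hx0
        have hPspan : (L₁ : Submodule F (Fin 5 → F)) ⊓ ↑L₂ = Submodule.span F {x} := by
          apply le_antisymm
          · intro w hw
            obtain ⟨c, hc⟩ := hvgen ⟨w, hw⟩
            exact Submodule.mem_span_singleton.mpr ⟨c, by simpa [hxdef] using congrArg Subtype.val hc⟩
          · rw [Submodule.span_le]
            intro z hz
            rw [Set.mem_singleton_iff] at hz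
            subst hz
            exact vx.2
        have hPle : ∀ L₃ ∈ s, (L₁ : Submodule F (Fin 5 → F)) ⊓ ↑L₂ ≤ ↑L₃ := by
          intro L₃ h3
          by_cases h31 : L₃ = L₁
          · subst h31; exact inf_le_left
          by_cases h32 : L₃ = L₂
          · subst h32; exact inf_le_right
          by_contra hP3
          have h13 := hadj L₁ L₃ hL₁ h3 (fun h => h31 h.symm)
          have h23 := hadj L₂ L₃ hL₂ h3 (fun h => h32 h.symm)
          apply no_triangle hF
          refine ⟨↑L₁, ↑L₂, ↑L₃, L₁.2, L₂.2, L₃.2, h12, h13, h23, ?_, ?_, ?_⟩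
          · intro h; apply hP3; rw [h]; exact inf_le_right
          · intro h; apply hP3; rw [h]; exact inf_le_right
          · intro h; apply hP3
            have hQle : (L₁ : Submodule F (Fin 5 → F)) ⊓ ↑L₃ ≤ (L₁ : Submodule F (Fin 5 → F)) ⊓ ↑L₂ :=
              le_inf inf_le_left ((le_of_eq h).trans inf_le_left)
            have heq : (L₁ : Submodule F (Fin 5 → F)) ⊓ ↑L₃ = (L₁ : Submodule F (Fin 5 → F)) ⊓ ↑L₂ :=
              Submodule.eq_of_le_of_finrank_le hQle (by omega)
            rw [← heq]; exact inf_le_right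
        refine ⟨(L₁ : Submodule F (Fin 5 → F)) ⊓ ↑L₂, ⟨x, hxs, hPspan⟩, ?_⟩
        apply hmax
        · intro A hA B hB hAB
          exact mkadj _ h12 A B hAB hA hB
        · intro L hL
          exact hPle L hL
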